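/- arXiv:1309.5067 — 3 statements merged into one kernel-verified Lean document; each statement's English description precedes it below -/
import Mathlib

section
/- For a real invertible 3×3 matrix M, all eigenvalues of M have strictly negative real part if and only if det(M) < 0, tr(M) < 0, and tr(M)·tr(M⁻¹) > 1. -/
open Polynomial Matrix Complex

section Aux


lemma root_neg_of_RH {a c d r : ℝ} (ha : a < 0) (hc : 0 < c) (hd : d < 0)
    (hr : r^3 - a*r^2 + c*r - d = 0) (hr0 : r ≠ 0) : r < 0 := by
  rcases lt_or_gt_of_ne hr0 with h | h
  · exact h
  · nlinarith

lemma L_real {r1 r2 r3 a c d : ℝ} (h1 : r1 + r2 + r3 = a)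
    (h2 : r1*r2 + r1*r3 + r2*r3 = c) (h3 : r1*r2*r3 = d) (hd : d ≠ 0) :
    (r1 < 0 ∧ r2 < 0 ∧ r3 < 0) ↔ (d < 0 ∧ a < 0 ∧ a*c < d) := by
  constructor
  · rintro ⟨n1, n2, n3⟩
    refine ⟨by nlinarith [mul_pos (mul_pos (neg_pos.2 n1) (neg_pos.2 n2)) (neg_pos.2 n3)], by nlinarith, ?_⟩
    have key : a*c - d = (r1+r2)*(r2+r3)*(r1+r3) := by rw [← h1, ← h2, ← h3]; ring
    nlinarith [mul_pos (by linarith : (0:ℝ) < -(r1+r2)) (by linarith : (0:ℝ) < -(r2+r3))]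
  · rintro ⟨hdn, han, hacd⟩
    have hr1 : r1 ≠ 0 := by rintro rfl; simp at h3; exact hd (by linarith)
    have hr2 : r2 ≠ 0 := by rintro rfl; rw [show r1*0*r3 = 0 by ring] at h3; exact hd (by linarith)
    have hr3 : r3 ≠ 0 := by rintro rfl; rw [show r1*r2*0 = 0 by ring] at h3; exact hd (by linarith)
    have hcpos : 0 < c := by nlinarith
    refine ⟨?_, ?_, ?_⟩
    · exact root_neg_of_RH han hcpos hdn (by rw [← h1, ← h2, ← h3]; ring) hr1
    · exact root_neg_of_RH han hcpos hdn (by rw [← h1, ← h2, ← h3]; ring) hr2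
    · exact root_neg_of_RH han hcpos hdn (by rw [← h1, ← h2, ← h3]; ring) hr3

lemma L_pair {x y r a c d : ℝ} (hy : y ≠ 0) (h1 : 2*x + r = a)
    (h2 : x^2 + y^2 + 2*x*r = c) (h3 : (x^2 + y^2)*r = d) :
    (x < 0 ∧ r < 0) ↔ (d < 0 ∧ a < 0 ∧ a*c < d) := by
  have hxy : 0 < x^2 + y^2 := by positivity
  have key : a*c - d = 2*x*((x+r)^2 + y^2) := by rw [← h1, ← h2, ← h3]; ring
  have hpos : 0 < (x+r)^2 + y^2 := by positivity
  constructor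
  · rintro ⟨hx, hr⟩
    refine ⟨by nlinarith, by nlinarith, by nlinarith⟩
  · rintro ⟨hdn, han, hacd⟩
    have hr : r < 0 := by nlinarith
    have hx : x < 0 := by nlinarith
    exact ⟨hx, hr⟩

-- bridge for the pair case: roots μ, conj μ, ρ
lemma pair_bridge {a c d : ℝ} {μ ρ : ℂ} (hμ : μ.im ≠ 0)
    (h1 : μ + (starRingEnd ℂ) μ + ρ = (a:ℂ))
    (h2 : μ * (starRingEnd ℂ) μ + μ * ρ + (starRingEnd ℂ) μ * ρ = (c:ℂ))
    (h3 : μ * (starRingEnd ℂ) μ * ρ = (d:ℂ)) :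
    (μ.re < 0 ∧ ρ.re < 0) ↔ (d < 0 ∧ a < 0 ∧ a*c < d) := by
  have hρ : ρ.im = 0 := by
    have := congrArg Complex.im h1
    simpa using this
  have e1 : 2*μ.re + ρ.re = a := by
    have := congrArg Complex.re h1
    simp at this
    linarith
  have e2 : μ.re^2 + μ.im^2 + 2*μ.re*ρ.re = c := by
    have := congrArg Complex.re h2
    simp [Complex.mul_re, Complex.mul_im, hρ] at this
    nlinarith [this]
  have e3 : (μ.re^2 + μ.im^2)*ρ.re = d := by
    have := congrArg Complex.re h3
    simp [Complex.mul_re, Complex.mul_im, hρ] at this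
    nlinarith [this]
  exact L_pair hμ e1 e2 e3

lemma real_bridge {a c d : ℝ} {μ1 μ2 μ3 : ℂ} (hi1 : μ1.im = 0) (hi2 : μ2.im = 0) (hi3 : μ3.im = 0)
    (h1 : μ1 + μ2 + μ3 = (a:ℂ)) (h2 : μ1*μ2 + μ1*μ3 + μ2*μ3 = (c:ℂ))
    (h3 : μ1*μ2*μ3 = (d:ℂ)) (hd : d ≠ 0) :
    (μ1.re < 0 ∧ μ2.re < 0 ∧ μ3.re < 0) ↔ (d < 0 ∧ a < 0 ∧ a*c < d) := by
  have e1 : μ1.re + μ2.re + μ3.re = a := by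
    have := congrArg Complex.re h1; simpa using this
  have e2 : μ1.re*μ2.re + μ1.re*μ3.re + μ2.re*μ3.re = c := by
    have := congrArg Complex.re h2; simp [Complex.mul_re, hi1, hi2, hi3] at this; linarith
  have e3 : μ1.re*μ2.re*μ3.re = d := by
    have := congrArg Complex.re h3; simp [Complex.mul_re, Complex.mul_im, hi1, hi2, hi3] at this
    linarith
  exact L_real e1 e2 e3 hd

lemma main_cx {a c d : ℝ} {μ1 μ2 μ3 : ℂ}
    (h1 : μ1 + μ2 + μ3 = (a:ℂ)) (h2 : μ1*μ2 + μ1*μ3 + μ2*μ3 = (c:ℂ))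
    (h3 : μ1*μ2*μ3 = (d:ℂ)) (hd : d ≠ 0)
    (hst : ∀ z, (z = μ1 ∨ z = μ2 ∨ z = μ3) →
      ((starRingEnd ℂ) z = μ1 ∨ (starRingEnd ℂ) z = μ2 ∨ (starRingEnd ℂ) z = μ3)) :
    (μ1.re < 0 ∧ μ2.re < 0 ∧ μ3.re < 0) ↔ (d < 0 ∧ a < 0 ∧ a*c < d) := by
  by_cases hi1 : μ1.im = 0
  · by_cases hi2 : μ2.im = 0
    · by_cases hi3 : μ3.im = 0
      · exact real_bridge hi1 hi2 hi3 h1 h2 h3 hd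
      · rcases hst μ3 (by tauto) with hc | hc | hc
        · have := congrArg Complex.im hc; simp [hi1] at this; exact absurd this hi3
        · have := congrArg Complex.im hc; simp [hi2] at this; exact absurd this hi3
        · exact absurd ((Complex.conj_eq_iff_im).mp hc) hi3
    · rcases hst μ2 (by tauto) with hc | hc | hc
      · -- conj μ2 = μ1, roots: μ2, conj μ2, μ3
        have key := pair_bridge (a := a) (c := c) (d := d) (μ := μ2) (ρ := μ3) hi2
          (by rw [hc]; linear_combination h1)
          (by rw [hc]; linear_combination h2)
          (by rw [hc]; linear_combination h3)
        have hre : μ1.re = μ2.re := by rw [← hc]; simp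
        rw [hre]; tauto
      · exact absurd ((Complex.conj_eq_iff_im).mp hc) hi2
      · -- conj μ2 = μ3, roots: μ2, conj μ2, μ1
        have key := pair_bridge (a := a) (c := c) (d := d) (μ := μ2) (ρ := μ1) hi2
          (by rw [hc]; linear_combination h1)
          (by rw [hc]; linear_combination h2)
          (by rw [hc]; linear_combination h3)
        have hre : μ3.re = μ2.re := by rw [← hc]; simp
        rw [hre]; tauto
  · rcases hst μ1 (by tauto) with hc | hc | hc
    · exact absurd ((Complex.conj_eq_iff_im).mp hc) hi1
    · -- conj μ1 = μ2
      have key := pair_bridge (a := a) (c := c) (d := d) (μ := μ1) (ρ := μ3) hi1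
        (by rw [hc]; linear_combination h1)
        (by rw [hc]; linear_combination h2)
        (by rw [hc]; linear_combination h3)
      have hre : μ2.re = μ1.re := by rw [← hc]; simp
      rw [hre]; tauto
    · -- conj μ1 = μ3
      have key := pair_bridge (a := a) (c := c) (d := d) (μ := μ1) (ρ := μ2) hi1
        (by rw [hc]; linear_combination h1)
        (by rw [hc]; linear_combination h2)
        (by rw [hc]; linear_combination h3)
      have hre : μ3.re = μ1.re := by rw [← hc]; simp
      rw [hre]; tauto


lemma charpoly_fin_three (M : Matrix (Fin 3) (Fin 3) ℝ) :
    M.charpoly = X^3 - C M.trace * X^2 + C M.adjugate.trace * X - C M.det := by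
  rw [Matrix.charpoly, Matrix.det_fin_three, Matrix.trace_fin_three, Matrix.det_fin_three,
    Matrix.adjugate_fin_three, Matrix.trace_fin_three]
  simp [charmatrix_apply_eq, charmatrix_apply_ne, Matrix.cons_val_zero, Matrix.cons_val_one]
  ring


lemma mem_spectrum_iff_isRoot {N : Matrix (Fin 3) (Fin 3) ℂ} {μ : ℂ} :
    μ ∈ spectrum ℂ N ↔ N.charpoly.IsRoot μ := by
  have hev : N.charpoly.eval μ = ((charmatrix N).map (evalRingHom μ)).det := by
    rw [Matrix.charpoly]
    exact (RingHom.map_det (evalRingHom μ) (charmatrix N))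
  have hmat : (charmatrix N).map (evalRingHom μ) =
      (algebraMap ℂ (Matrix (Fin 3) (Fin 3) ℂ)) μ - N := by
    ext i j
    by_cases h : i = j
    · subst h; simp [charmatrix_apply_eq, Matrix.algebraMap_matrix_apply]
    · simp [charmatrix_apply_ne _ _ _ h, Matrix.algebraMap_matrix_apply, h]
  rw [spectrum.mem_iff, IsRoot, hev, hmat, Matrix.isUnit_iff_isUnit_det]
  simp [isUnit_iff_ne_zero]

end Aux

/-- A real square matrix is Hurwitz if every complex eigenvalue has
strictly negative real part. -/
def IsHurwitz {n : ℕ} (M : Matrix (Fin n) (Fin n) ℝ) : Prop :=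
  ∀ μ ∈ spectrum ℂ (M.map (algebraMap ℝ ℂ)), μ.re < 0

theorem hurwitz_three_iff (M : Matrix (Fin 3) (Fin 3) ℝ) (hdet : M.det ≠ 0) :
    IsHurwitz M ↔ M.det < 0 ∧ M.trace < 0 ∧ 1 < M.trace * (M⁻¹).trace := by
  set a := M.trace with ha
  set c := M.adjugate.trace with hc
  set d := M.det with hd
  set N := M.map (algebraMap ℝ ℂ) with hN
  have hp : N.charpoly = (M.charpoly).map (algebraMap ℝ ℂ) := Matrix.charpoly_map M _
  have hpform : N.charpoly = X^3 - C (a:ℂ)*X^2 + C (c:ℂ)*X - C (d:ℂ) := by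
    rw [hp, charpoly_fin_three]
    simp
    rfl
  have hmon : N.charpoly.Monic := Matrix.charpoly_monic N
  have hpne : N.charpoly ≠ 0 := hmon.ne_zero
  have hdeg : N.charpoly.natDegree = 3 := by
    rw [Matrix.charpoly_natDegree_eq_dim]; simp
  have hcard : Multiset.card N.charpoly.roots = 3 := by
    rw [(Polynomial.splits_iff_card_roots).mp (IsAlgClosed.splits N.charpoly), hdeg]
  obtain ⟨μ1, μ2, μ3, hroots⟩ := Multiset.card_eq_three.mp hcard
  have hfact : N.charpoly = (X - C μ1) * ((X - C μ2) * (X - C μ3)) := by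
    conv_lhs => rw [(IsAlgClosed.splits _).eq_prod_roots_of_monic hmon]
    rw [hroots]
    simp [Multiset.map_cons, Multiset.prod_cons]
  have key : X^3 - C ((a:ℂ))*X^2 + C ((c:ℂ))*X - C ((d:ℂ))
      = X^3 - C (μ1+μ2+μ3)*X^2 + C (μ1*μ2+μ1*μ3+μ2*μ3)*X - C (μ1*μ2*μ3) := by
    rw [← hpform, hfact]
    simp only [C_add, C_mul]
    ring
  have h1 : μ1 + μ2 + μ3 = (a:ℂ) := by
    have := congrArg (fun p => coeff p 2) key
    simp only [coeff_add, coeff_sub, coeff_C_mul, coeff_X_pow, coeff_C, coeff_X] at this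
    norm_num at this
    linear_combination this
  have h2 : μ1*μ2 + μ1*μ3 + μ2*μ3 = (c:ℂ) := by
    have := congrArg (fun p => coeff p 1) key
    simp only [coeff_add, coeff_sub, coeff_C_mul, coeff_X_pow, coeff_C, coeff_X] at this
    norm_num at this
    linear_combination -this
  have h3 : μ1*μ2*μ3 = (d:ℂ) := by
    have := congrArg (fun p => coeff p 0) key
    simp only [coeff_add, coeff_sub, coeff_C_mul, coeff_X_pow, coeff_C, coeff_X] at this
    norm_num at this
    linear_combination -this
  have hspec : ∀ μ : ℂ, μ ∈ spectrum ℂ N ↔ (μ = μ1 ∨ μ = μ2 ∨ μ = μ3) := by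
    intro μ
    rw [mem_spectrum_iff_isRoot, ← Polynomial.mem_roots hpne, hroots]
    simp
  have hst : ∀ z : ℂ, (z = μ1 ∨ z = μ2 ∨ z = μ3) →
      ((starRingEnd ℂ) z = μ1 ∨ (starRingEnd ℂ) z = μ2 ∨ (starRingEnd ℂ) z = μ3) := by
    intro z hz
    have hzr : N.charpoly.IsRoot z := by
      rw [← Polynomial.mem_roots hpne, hroots]; simpa using hz
    have hzr' : N.charpoly.IsRoot ((starRingEnd ℂ) z) := by
      rw [hp] at hzr ⊢
      have : aeval ((starRingEnd ℂ) z) M.charpoly = (starRingEnd ℂ) (aeval z M.charpoly) :=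
        aeval_conj M.charpoly z
      rw [IsRoot, Polynomial.eval_map, ← Polynomial.aeval_def] at hzr ⊢
      rw [this, hzr, map_zero]
    rw [← Polynomial.mem_roots hpne, hroots] at hzr'
    simpa using hzr'
  have hhur : IsHurwitz M ↔ (μ1.re < 0 ∧ μ2.re < 0 ∧ μ3.re < 0) := by
    unfold IsHurwitz
    constructor
    · intro h
      exact ⟨h μ1 ((hspec μ1).mpr (by tauto)), h μ2 ((hspec μ2).mpr (by tauto)),
        h μ3 ((hspec μ3).mpr (by tauto))⟩
    · rintro ⟨k1, k2, k3⟩ μ hμ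
      rcases (hspec μ).mp hμ with rfl | rfl | rfl <;> assumption
  rw [hhur, main_cx h1 h2 h3 hdet hst]
  have htr : (M⁻¹).trace = c / d := by
    rw [Matrix.inv_def, Matrix.trace_smul, Ring.inverse_eq_inv, ← hd, ← hc]
    rw [smul_eq_mul]; field_simp
  constructor
  · rintro ⟨u, v, w⟩
    refine ⟨u, v, ?_⟩
    rw [htr, ha, ← mul_div_assoc, one_lt_div_of_neg u]
    exact w
  · rintro ⟨u, v, w⟩
    refine ⟨u, v, ?_⟩
    rw [htr, ha, ← mul_div_assoc, one_lt_div_of_neg u] at w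
    exact w
end

section
/- Let A be a 3×3 real invertible matrix and B = A⁻¹. If every diagonal entry of B is zero, then for every diagonal matrix D = diag(c₁,c₂,c₃), the matrix DA is not Hurwitz. -/
open Polynomial Matrix

/-- Roots of the characteristic polynomial lie in the spectrum. -/
lemma mem_spectrum_of_isRoot_charpoly {K : Type*} [Field K] {n : Type*} [Fintype n]
    [DecidableEq n] {M : Matrix n n K} {μ : K} (h : M.charpoly.IsRoot μ) :
    μ ∈ spectrum K M := by
  rw [spectrum.mem_iff]
  intro hu
  rw [Matrix.isUnit_iff_isUnit_det, isUnit_iff_ne_zero] at hu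
  apply hu
  have : (algebraMap K (Matrix n n K) μ - M).det = M.charpoly.eval μ := by
    rw [Matrix.charpoly, _root_.eval_det, Matrix.matPolyEquiv_charmatrix]
    simp [Matrix.scalar, Matrix.algebraMap_eq_diagonal]
  rw [this, h.eq_zero]

theorem no_fully_distributed_coordination_of_zero_diag_inverse
    (A : Matrix (Fin 3) (Fin 3) ℝ) (hdet : A.det ≠ 0)
    (hdiag : ∀ i, A⁻¹ i i = 0) :
    ∀ c : Fin 3 → ℝ, ¬ IsHurwitz (Matrix.diagonal c * A) := by
  intro c hH
  set f := algebraMap ℝ ℂ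
  set M : Matrix (Fin 3) (Fin 3) ℝ := Matrix.diagonal c * A with hM
  set M' : Matrix (Fin 3) (Fin 3) ℂ := M.map f with hM'
  by_cases hc : ∀ i, c i ≠ 0
  · -- all diagonal weights nonzero
    have hdetM : M.det ≠ 0 := by
      rw [hM, Matrix.det_mul, Matrix.det_diagonal]
      exact mul_ne_zero (Finset.prod_ne_zero_iff.mpr fun i _ => hc i) hdet
    have hdetM' : M'.det ≠ 0 := by
      rw [hM', ← RingHom.mapMatrix_apply, ← RingHom.map_det]
      simpa using hdetM
    have hUnit : IsUnit M' := by
      rw [Matrix.isUnit_iff_isUnit_det]; exact isUnit_iff_ne_zero.mpr hdetM'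
    -- trace of M⁻¹ is zero
    have htr : (M⁻¹).trace = 0 := by
      have : M⁻¹ = A⁻¹ * (Matrix.diagonal c)⁻¹ := by rw [hM, Matrix.mul_inv_rev]
      rw [this, Matrix.inv_diagonal]
      simp [Matrix.trace, Matrix.diag, Matrix.mul_diagonal, hdiag]
    -- complex inverse is map of real inverse
    have hinv : M'⁻¹ = (M⁻¹).map f := by
      apply Matrix.inv_eq_left_inv
      rw [hM', ← Matrix.map_mul, Matrix.nonsing_inv_mul M (isUnit_iff_ne_zero.mpr hdetM)]
      simp
    have htr' : (M'⁻¹).trace = 0 := by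
      have h1 : (M'⁻¹).trace = f M⁻¹.trace := by
        rw [hinv]
        simp [Matrix.trace, Matrix.diag, map_sum]
      rw [h1, htr, map_zero]
    -- roots of charpoly of M'⁻¹
    set N := M'⁻¹ with hN
    have hcard : N.charpoly.roots.card = 3 := by
      rw [Polynomial.splits_iff_card_roots.mp (IsAlgClosed.splits N.charpoly),
        Matrix.charpoly_natDegree_eq_dim]
      simp
    have hsum : N.charpoly.roots.sum = 0 := by
      rw [← Matrix.trace_eq_sum_roots_charpoly, htr']
    obtain ⟨u, hu⟩ := hUnit
    have hcoe : (↑u⁻¹ : Matrix (Fin 3) (Fin 3) ℂ) = N := by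
      rw [Matrix.coe_units_inv, hu]
    have hNunit : IsUnit N := hcoe ▸ (u⁻¹).isUnit
    -- every root has negative real part
    have hroot : ∀ ν ∈ N.charpoly.roots, ν.re < 0 := by
      intro ν hν
      have hνspec : ν ∈ spectrum ℂ N :=
        _root_.mem_spectrum_of_isRoot_charpoly (Polynomial.isRoot_of_mem_roots hν)
      have hν0 : ν ≠ 0 := by
        rintro rfl
        exact (spectrum.zero_mem_iff ℂ).mp hνspec hNunit
      have hmem : (↑(Units.mk0 ν hν0) : ℂ) ∈ spectrum ℂ ((↑u⁻¹ : Matrix (Fin 3) (Fin 3) ℂ)) := by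
        simpa [hcoe] using hνspec
      have h2 := spectrum.inv_mem_iff.mp hmem
      simp only [inv_inv, hu, Units.val_inv_eq_inv_val, Units.val_mk0] at h2
      have hre : (ν⁻¹).re < 0 := hH _ h2
      have hns : Complex.normSq ν ≠ 0 := ne_of_gt (Complex.normSq_pos.mpr hν0)
      have hrw : ν.re = (ν⁻¹).re * Complex.normSq ν := by
        rw [Complex.inv_re, div_mul_cancel₀ _ hns]
      rw [hrw]
      exact mul_neg_of_neg_of_pos hre (Complex.normSq_pos.mpr hν0)
    obtain ⟨x, y, z, hxyz⟩ := Multiset.card_eq_three.mp hcard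
    rw [hxyz] at hsum hroot
    have hx := hroot x (by simp)
    have hy := hroot y (by simp)
    have hz := hroot z (by simp)
    have hs0 : (x + y + z).re = 0 := by
      have h3 : x + y + z = ({x, y, z} : Multiset ℂ).sum := by simp [add_assoc]
      rw [h3, hsum]
      exact Complex.zero_re
    simp only [Complex.add_re] at hs0
    linarith
  · -- some weight is zero: determinant vanishes
    push_neg at hc
    obtain ⟨i, hi⟩ := hc
    have hdetM : M.det = 0 := by
      rw [hM, Matrix.det_mul, Matrix.det_diagonal]
      rw [Finset.prod_eq_zero (Finset.mem_univ i) hi, zero_mul]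
    have hdetM' : M'.det = 0 := by
      rw [hM', ← RingHom.mapMatrix_apply, ← RingHom.map_det, hdetM]; simp
    have h0 : (0 : ℂ) ∈ spectrum ℂ M' := by
      rw [spectrum.zero_mem_iff, Matrix.isUnit_iff_isUnit_det, isUnit_iff_ne_zero]
      simpa using hdetM'
    have := hH 0 h0
    simp at this
end

section
/- Let A be a 3×3 real invertible matrix with A₁₁ < 0, and B = A⁻¹ with B₂₂ ≠ 0. Choose real c₂, c₃ with B₂₂/c₂ + B₃₃/c₃ < 0 and c₂c₃·det(A) < 0. Then there exists ε₀ > 0 such that for all 0 < ε < ε₀, the matrix diag(1, εc₂, εc₃)·A is Hurwitz. -/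
private lemma small_eps (p q r : ℝ) (hp : 0 < p) :
    ∃ ε₀ > 0, ∀ ε : ℝ, 0 < ε → ε < ε₀ → 0 < p + ε * q + ε ^ 2 * r := by
  refine ⟨min 1 (p / (|q| + |r| + 1)), lt_min one_pos (by positivity), ?_⟩
  intro ε hε hε'
  have h1 : ε < 1 := lt_of_lt_of_le hε' (min_le_left _ _)
  have hd : (0:ℝ) < |q| + |r| + 1 := by positivity
  have h3 : ε * (|q| + |r| + 1) < p :=
    (lt_div_iff₀ hd).mp (lt_of_lt_of_le hε' (min_le_right _ _))
  have hq : ε * -|q| ≤ ε * q := mul_le_mul_of_nonneg_left (neg_abs_le q) hε.le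
  have hr : ε ^ 2 * -|r| ≤ ε ^ 2 * r :=
    mul_le_mul_of_nonneg_left (neg_abs_le r) (by positivity)
  have h4 : ε ^ 2 * |r| ≤ ε * |r| :=
    mul_le_mul_of_nonneg_right (by nlinarith) (abs_nonneg r)
  nlinarith [abs_nonneg q, abs_nonneg r]

private lemma cubic_re_neg (a₂ a₁ a₀ : ℝ) (h2 : 0 < a₂) (h1 : 0 < a₁) (h0 : 0 < a₀)
    (hR : a₀ < a₂ * a₁) (μ : ℂ)
    (h : μ ^ 3 + (a₂:ℂ) * μ ^ 2 + (a₁:ℂ) * μ + (a₀:ℂ) = 0) : μ.re < 0 := by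
  obtain ⟨x, y⟩ := μ
  rw [Complex.ext_iff] at h
  obtain ⟨hre, him⟩ := h
  simp [pow_succ, Complex.mul_re, Complex.mul_im] at hre him
  show x < 0
  by_contra hcon
  push_neg at hcon
  rcases eq_or_ne y 0 with h0y | h0y
  · rw [h0y] at hre
    nlinarith [pow_nonneg hcon 3, mul_nonneg (mul_nonneg h2.le hcon) hcon,
      mul_nonneg h1.le hcon]
  · have himy : 3 * x ^ 2 - y ^ 2 + 2 * a₂ * x + a₁ = 0 := by
      apply mul_left_cancel₀ h0y
      linear_combination him
    have key : 8 * x ^ 3 + 8 * a₂ * x ^ 2 + 2 * (a₁ + a₂ ^ 2) * x + (a₂ * a₁ - a₀) = 0 := by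
      linear_combination -hre + (3 * x + a₂) * himy
    nlinarith [pow_nonneg hcon 3, mul_nonneg (mul_nonneg h2.le hcon) hcon,
      mul_nonneg h1.le hcon, mul_nonneg (mul_nonneg h2.le h2.le) hcon]

private lemma det_key (A : Matrix (Fin 3) (Fin 3) ℝ) (c₂ c₃ ε : ℝ) (μ : ℂ) :
    (algebraMap ℂ (Matrix (Fin 3) (Fin 3) ℂ) μ -
      ((Matrix.diagonal ![1, ε*c₂, ε*c₃] * A).map (algebraMap ℝ ℂ))).det
    = μ^3 + ((-(A 0 0 + ε*(c₂*A 1 1 + c₃*A 2 2)) : ℝ) : ℂ) * μ^2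
      + ((ε*(c₂*(A 0 0*A 1 1 - A 0 1*A 1 0) + c₃*(A 0 0*A 2 2 - A 0 2*A 2 0))
          + ε^2*(c₂*c₃*(A 1 1*A 2 2 - A 1 2*A 2 1)) : ℝ) : ℂ) * μ
      + ((-(ε^2*(c₂*c₃*A.det)) : ℝ) : ℂ) := by
  simp only [Matrix.det_fin_three, Matrix.algebraMap_eq_diagonal, Matrix.sub_apply,
    Matrix.diagonal_apply, Matrix.map_apply, Matrix.diagonal_mul, Matrix.cons_val_zero,
    Matrix.cons_val_one, Matrix.head_cons, Matrix.cons_val_two, Matrix.tail_cons]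
  push_cast
  simp
  ring

theorem fully_distributed_coordination_three
    (A : Matrix (Fin 3) (Fin 3) ℝ) (hdet : A.det ≠ 0)
    (h11 : A 0 0 < 0) (hB22 : A⁻¹ 1 1 ≠ 0)
    (c₂ c₃ : ℝ)
    (hc : A⁻¹ 1 1 / c₂ + A⁻¹ 2 2 / c₃ < 0)
    (hcdet : c₂ * c₃ * A.det < 0) :
    ∃ ε₀ > 0, ∀ ε : ℝ, 0 < ε → ε < ε₀ →
      IsHurwitz (Matrix.diagonal ![1, ε * c₂, ε * c₃] * A) := by
  have hc₂ : c₂ ≠ 0 := by rintro rfl; simp at hcdet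
  have hc₃ : c₃ ≠ 0 := by rintro rfl; simp at hcdet
  have hinv11 : A⁻¹ 1 1 = (A 0 0 * A 2 2 - A 0 2 * A 2 0) / A.det := by
    rw [Matrix.inv_def, Matrix.adjugate_fin_three]
    simp [Matrix.smul_apply, div_eq_inv_mul]
  have hinv22 : A⁻¹ 2 2 = (A 0 0 * A 1 1 - A 0 1 * A 1 0) / A.det := by
    rw [Matrix.inv_def, Matrix.adjugate_fin_three]
    simp [Matrix.smul_apply, div_eq_inv_mul]
  set P := A 0 0 * A 1 1 - A 0 1 * A 1 0 with hP
  set Q := A 0 0 * A 2 2 - A 0 2 * A 2 0 with hQ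
  set R := A 1 1 * A 2 2 - A 1 2 * A 2 1 with hR
  set K := c₂ * P + c₃ * Q with hKdef
  set D := c₂ * c₃ * R with hDdef
  set e := -(c₂ * c₃ * A.det) with hedef
  set α := -(A 0 0) with hαdef
  set s := c₂ * A 1 1 + c₃ * A 2 2 with hsdef
  clear_value P Q R K D e α s
  have hα : 0 < α := by rw [hαdef]; linarith
  have he : 0 < e := by rw [hedef]; linarith
  have hK : 0 < K := by
    have key : (c₂ * c₃ * A.det) * (A⁻¹ 1 1 / c₂ + A⁻¹ 2 2 / c₃) = c₃ * Q + c₂ * P := by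
      rw [hinv11, hinv22]; field_simp
    have h := mul_pos_of_neg_of_neg hcdet hc
    rw [key] at h
    rw [hKdef]; linarith
  obtain ⟨e₁, he₁, H1⟩ := small_eps α (-s) 0 hα
  obtain ⟨e₂, he₂, H2⟩ := small_eps K D 0 hK
  obtain ⟨e₃, he₃, H3⟩ := small_eps (α * K) (α * D - s * K - e) (-(s * D)) (mul_pos hα hK)
  refine ⟨min e₁ (min e₂ e₃), lt_min he₁ (lt_min he₂ he₃), ?_⟩
  intro ε hε hε'
  have hε₁ : ε < e₁ := lt_of_lt_of_le hε' (min_le_left _ _)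
  have hε₂ : ε < e₂ := lt_of_lt_of_le hε' ((min_le_right _ _).trans (min_le_left _ _))
  have hε₃ : ε < e₃ := lt_of_lt_of_le hε' ((min_le_right _ _).trans (min_le_right _ _))
  have ha2 : 0 < α - ε * s := by have h3 := H1 ε hε hε₁; nlinarith [h3]
  have ha1 : 0 < ε * K + ε ^ 2 * D := by
    have h3 := H2 ε hε hε₂
    have h4 := mul_pos hε h3
    have h5 : ε * (K + ε * D + ε ^ 2 * 0) = ε * K + ε ^ 2 * D := by ring
    rw [h5] at h4
    exact h4
  have ha0 : 0 < ε ^ 2 * e := by positivity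
  have hrouth : ε ^ 2 * e < (α - ε * s) * (ε * K + ε ^ 2 * D) := by
    have h3 := H3 ε hε hε₃
    have h4 := mul_pos hε h3
    have h5 : ε * (α * K + ε * (α * D - s * K - e) + ε ^ 2 * -(s * D))
        = (α - ε * s) * (ε * K + ε ^ 2 * D) - ε ^ 2 * e := by ring
    rw [h5] at h4
    linarith
  intro μ hμ
  rw [spectrum.mem_iff] at hμ
  have hdet0 : (algebraMap ℂ (Matrix (Fin 3) (Fin 3) ℂ) μ -
      ((Matrix.diagonal ![1, ε * c₂, ε * c₃] * A).map (algebraMap ℝ ℂ))).det = 0 := by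
    by_contra hne
    exact hμ ((Matrix.isUnit_iff_isUnit_det _).mpr (isUnit_iff_ne_zero.mpr hne))
  rw [det_key A c₂ c₃ ε μ] at hdet0
  have heq : μ ^ 3 + ((α - ε * s : ℝ) : ℂ) * μ ^ 2
      + ((ε * K + ε ^ 2 * D : ℝ) : ℂ) * μ + ((ε ^ 2 * e : ℝ) : ℂ) = 0 := by
    rw [← hdet0]
    push_cast [hαdef, hsdef, hKdef, hDdef, hedef, hP, hQ, hR]
    ring
  exact cubic_re_neg _ _ _ ha2 ha1 ha0 hrouth μ heq
end
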